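/- Define h(n) recursively by h(n) = C_{2n-2} + ∑_{i=1}^{n-1} h(i) * 2 * C_{2n-2i-1} for n ≥ 1 (so h(1) = C_0 = 1). Then h(n) = 4^{n-1} * C_{n-1} for all n ≥ 1, where C_m denotes the m-th Catalan number. -/

import Mathlib

open PowerSeries Finset

-- range-form Catalan recurrence
lemma catalan_succ_range (n : ℕ) :
    catalan (n + 1) = ∑ k ∈ range (n + 1), catalan k * catalan (n - k) := by
  rw [catalan_succ', Finset.Nat.sum_antidiagonal_eq_sum_range_succ_mk]

-- even/odd split of a sum
lemma sum_range_even_odd (f : ℕ → ℕ) (k : ℕ) :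
    ∑ i ∈ range (2 * k), f i
      = ∑ i ∈ range k, f (2 * i) + ∑ i ∈ range k, f (2 * i + 1) := by
  induction k with
  | zero => simp
  | succ k ih =>
    have h1 : 2 * (k + 1) = (2 * k + 1) + 1 := by ring
    rw [h1, sum_range_succ, sum_range_succ, ih, sum_range_succ, sum_range_succ]
    ring

noncomputable def Ecat : PowerSeries ℕ := PowerSeries.mk fun n => catalan (2 * n)
noncomputable def Ocat : PowerSeries ℕ := PowerSeries.mk fun n => catalan (2 * n + 1)
noncomputable def Fcat : PowerSeries ℕ := PowerSeries.mk fun n => 4 ^ n * catalan n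

-- coefficient-level R: C_{2n+2} = 2 * sum
lemma keyR (n : ℕ) :
    catalan (2 * (n + 1)) = 2 * ∑ i ∈ range (n + 1), catalan (2 * i) * catalan (2 * (n - i) + 1) := by
  have h : 2 * (n + 1) = (2 * n + 1) + 1 := by ring
  rw [h, catalan_succ_range]
  have h2 : (2 * n + 1) + 1 = 2 * (n + 1) := by ring
  rw [h2, sum_range_even_odd]
  have he : ∀ i ∈ range (n + 1), catalan (2 * i) * catalan (2 * n + 1 - 2 * i)
      = catalan (2 * i) * catalan (2 * (n - i) + 1) := by
    intro i hi
    simp only [mem_range] at hi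
    congr 2
    omega
  have ho : ∑ i ∈ range (n + 1), catalan (2 * i + 1) * catalan (2 * n + 1 - (2 * i + 1))
      = ∑ i ∈ range (n + 1), catalan (2 * i) * catalan (2 * (n - i) + 1) := by
    rw [← Finset.sum_range_reflect (fun i => catalan (2 * i) * catalan (2 * (n - i) + 1)) (n + 1)]
    apply Finset.sum_congr rfl
    intro i hi
    simp only [mem_range] at hi
    have e1 : 2 * (n + 1 - 1 - i) = 2 * n + 1 - (2 * i + 1) := by omega
    have e2 : 2 * (n - (n + 1 - 1 - i)) + 1 = 2 * i + 1 := by omega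
    rw [e1, e2, mul_comm]
  rw [Finset.sum_congr rfl he, ho]
  ring

-- coefficient-level S: C_{2n+1} = sum_{i+j=n} C_{2i}C_{2j} + sum_{i+j=n-1} C_{2i+1}C_{2j+1}
lemma keyS (n : ℕ) :
    catalan (2 * n + 1) = (∑ i ∈ range (n + 1), catalan (2 * i) * catalan (2 * (n - i)))
      + ∑ i ∈ range n, catalan (2 * i + 1) * catalan (2 * (n - 1 - i) + 1) := by
  rw [catalan_succ_range, sum_range_succ, sum_range_even_odd]
  have he : ∀ i ∈ range n, catalan (2 * i) * catalan (2 * n - 2 * i)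
      = catalan (2 * i) * catalan (2 * (n - i)) := by
    intro i hi; simp only [mem_range] at hi; congr 2; omega
  have ho : ∀ i ∈ range n, catalan (2 * i + 1) * catalan (2 * n - (2 * i + 1))
      = catalan (2 * i + 1) * catalan (2 * (n - 1 - i) + 1) := by
    intro i hi; simp only [mem_range] at hi; congr 2; omega
  rw [Finset.sum_congr rfl he, Finset.sum_congr rfl ho]
  have : catalan (2 * n) * catalan (2 * n - 2 * n) = catalan (2 * n) * catalan (2 * (n - n)) := by
    congr 2; omega
  rw [this]
  have : ∑ i ∈ range (n + 1), catalan (2 * i) * catalan (2 * (n - i))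
      = (∑ i ∈ range n, catalan (2 * i) * catalan (2 * (n - i)))
        + catalan (2 * n) * catalan (2 * (n - n)) := sum_range_succ _ n
  rw [this]
  ring

-- power series R: E = 1 + 2 X E O
lemma seriesR : Ecat = 1 + PowerSeries.C (R := ℕ) 2 * (PowerSeries.X * (Ecat * Ocat)) := by
  ext n
  cases n with
  | zero =>
    simp [Ecat, PowerSeries.coeff_zero_eq_constantCoeff]
  | succ n =>
    rw [map_add, PowerSeries.coeff_C_mul, PowerSeries.coeff_succ_X_mul]
    have : (PowerSeries.coeff (R := ℕ) (n+1)) 1 = 0 := by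
      simp [PowerSeries.coeff_one]
    rw [this, zero_add, PowerSeries.coeff_mul,
      Finset.Nat.sum_antidiagonal_eq_sum_range_succ_mk]
    simp only [Ecat, Ocat, PowerSeries.coeff_mk]
    exact keyR n

-- power series S: O = E^2 + X O^2
lemma seriesS : Ocat = Ecat ^ 2 + PowerSeries.X * Ocat ^ 2 := by
  ext n
  rw [map_add, pow_two, pow_two, PowerSeries.coeff_mul,
    Finset.Nat.sum_antidiagonal_eq_sum_range_succ_mk]
  cases n with
  | zero =>
    simp [Ocat, Ecat]
  | succ n =>
    rw [PowerSeries.coeff_succ_X_mul, PowerSeries.coeff_mul,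
      Finset.Nat.sum_antidiagonal_eq_sum_range_succ_mk]
    simp only [Ecat, Ocat, PowerSeries.coeff_mk]
    have := keyS (n + 1)
    rw [this]
    congr 1

-- power series F equation: F = 1 + 4 X F^2
lemma seriesF : Fcat = 1 + PowerSeries.C (R := ℕ) 4 * (PowerSeries.X * Fcat ^ 2) := by
  ext n
  cases n with
  | zero => simp [Fcat, PowerSeries.coeff_zero_eq_constantCoeff]
  | succ n =>
    rw [map_add, PowerSeries.coeff_C_mul, PowerSeries.coeff_succ_X_mul]
    have h1 : (PowerSeries.coeff (R := ℕ) (n+1)) 1 = 0 := by simp [PowerSeries.coeff_one]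
    rw [h1, zero_add, pow_two, PowerSeries.coeff_mul,
      Finset.Nat.sum_antidiagonal_eq_sum_range_succ_mk]
    simp only [Fcat, PowerSeries.coeff_mk]
    rw [catalan_succ_range, Finset.mul_sum, Finset.mul_sum]
    apply Finset.sum_congr rfl
    intro k hk
    simp only [mem_range] at hk
    have h4 : (4:ℕ) ^ k * 4 ^ (n - k) = 4 ^ n := by
      rw [← pow_add]; congr 1; omega
    calc 4 ^ (n + 1) * (catalan k * catalan (n - k))
        = 4 * ((4 ^ k * 4 ^ (n - k)) * (catalan k * catalan (n - k))) := by
          rw [h4]; ring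
      _ = 4 * (4 ^ k * catalan k * (4 ^ (n - k) * catalan (n - k))) := by ring


lemma C2_eq : (PowerSeries.C (R := ℕ) 2 : PowerSeries ℕ) = 2 := map_ofNat _ 2
lemma C4_eq : (PowerSeries.C (R := ℕ) 4 : PowerSeries ℕ) = 4 := map_ofNat _ 4

-- additive cancellation for PowerSeries ℕ
lemma ps_cancel (a b c : PowerSeries ℕ) (h : a + c = b + c) : a = b := by
  ext n
  have := congrArg (PowerSeries.coeff (R := ℕ) n) h
  simp only [map_add] at this
  omega

-- E^2 satisfies the same equation as F
lemma E2eq : Ecat ^ 2 = 1 + PowerSeries.C (R := ℕ) 4 * (PowerSeries.X * (Ecat ^ 2) ^ 2) := by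
  set e := Ecat with he
  set o := Ocat with ho
  set x := (PowerSeries.X : PowerSeries ℕ) with hx
  set u := x * (e * o) with hu
  have hR : e = 1 + PowerSeries.C (R := ℕ) 2 * u := seriesR
  have hS : o = e ^ 2 + x * o ^ 2 := seriesS
  rw [C2_eq] at hR
  rw [C4_eq]
  apply ps_cancel _ _ (4 * u ^ 2)
  have hA : e ^ 2 + 4 * u ^ 2 = 1 + 4 * (u * e) := by
    rw [hR]; ring
  have hB : (1 + 4 * (x * (e ^ 2) ^ 2)) + 4 * u ^ 2
      = 1 + 4 * (u * e) := by
    have step : (1 + 4 * (x * (e ^ 2) ^ 2)) + 4 * u ^ 2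
        = 1 + 4 * (x * (e ^ 2 * (e ^ 2 + x * o ^ 2))) := by
      rw [hu]; ring
    rw [step, ← hS]
    rw [hu]; ring
  rw [hA, hB]

-- uniqueness of solutions of G = 1 + 4 X G^2
lemma uniqF (G H : PowerSeries ℕ)
    (hG : G = 1 + PowerSeries.C (R := ℕ) 4 * (PowerSeries.X * G ^ 2))
    (hH : H = 1 + PowerSeries.C (R := ℕ) 4 * (PowerSeries.X * H ^ 2)) : G = H := by
  ext n
  induction n using Nat.strong_induction_on with
  | _ n ih =>
    cases n with
    | zero =>
      rw [hG, hH]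
      simp [PowerSeries.coeff_zero_eq_constantCoeff, map_mul]
    | succ n =>
      rw [hG, hH, map_add, map_add, PowerSeries.coeff_C_mul, PowerSeries.coeff_C_mul,
        PowerSeries.coeff_succ_X_mul, PowerSeries.coeff_succ_X_mul, pow_two, pow_two,
        PowerSeries.coeff_mul, PowerSeries.coeff_mul]
      congr 2
      apply Finset.sum_congr rfl
      intro p hp
      rw [Finset.HasAntidiagonal.mem_antidiagonal] at hp
      rw [ih p.1 (by omega), ih p.2 (by omega)]

lemma FeqE2 : Fcat = Ecat ^ 2 := uniqF _ _ seriesF E2eq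

-- key series identity: F = E + 2 X F O
lemma seriesK : Fcat = Ecat + PowerSeries.C (R := ℕ) 2 * (PowerSeries.X * (Fcat * Ocat)) := by
  rw [FeqE2]
  calc Ecat ^ 2 = Ecat * Ecat := by ring
    _ = Ecat * (1 + PowerSeries.C (R := ℕ) 2 * (PowerSeries.X * (Ecat * Ocat))) := by
        rw [← seriesR]
    _ = Ecat + PowerSeries.C (R := ℕ) 2 * (PowerSeries.X * (Ecat ^ 2 * Ocat)) := by ring

-- coefficient form of the key identity
lemma keyK (m : ℕ) :
    4 ^ m * catalan m = catalan (2 * m)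
      + 2 * ∑ j ∈ range m, (4 ^ j * catalan j) * catalan (2 * (m - 1 - j) + 1) := by
  have h := congrArg (PowerSeries.coeff (R := ℕ) m) seriesK
  rw [map_add, PowerSeries.coeff_C_mul] at h
  cases m with
  | zero =>
    simpa [Fcat, Ecat, PowerSeries.coeff_zero_eq_constantCoeff, map_mul] using h
  | succ k =>
    rw [PowerSeries.coeff_succ_X_mul, PowerSeries.coeff_mul,
      Finset.Nat.sum_antidiagonal_eq_sum_range_succ_mk] at h
    simp only [Fcat, Ecat, Ocat, PowerSeries.coeff_mk] at h
    rw [h]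
    congr 1

theorem marked_triangulation_count (h : ℕ → ℕ)
    (hrec : ∀ n : ℕ, 1 ≤ n →
      h n = catalan (2 * n - 2) +
        ∑ i ∈ Finset.Icc 1 (n - 1), h i * 2 * catalan (2 * n - 2 * i - 1)) :
    ∀ n : ℕ, 1 ≤ n → h n = 4 ^ (n - 1) * catalan (n - 1) := by
  intro n
  induction n using Nat.strong_induction_on with
  | _ n ih =>
    intro hn
    rw [hrec n hn]
    have hsum : ∑ i ∈ Finset.Icc 1 (n - 1), h i * 2 * catalan (2 * n - 2 * i - 1)
        = 2 * ∑ j ∈ range (n - 1), (4 ^ j * catalan j) * catalan (2 * ((n - 1) - 1 - j) + 1) := by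
      have hIcc : Finset.Icc 1 (n - 1) = Finset.Ico 1 n := by
        rw [← Finset.Ico_add_one_right_eq_Icc]
        congr 1
        omega
      rw [hIcc, Finset.sum_Ico_eq_sum_range, Finset.mul_sum]
      apply Finset.sum_congr rfl
      intro j hj
      simp only [mem_range] at hj
      have hjn : 1 + j < n := by omega
      rw [ih (1 + j) hjn (by omega)]
      have e1 : 1 + j - 1 = j := by omega
      have e2 : 2 * n - 2 * (1 + j) - 1 = 2 * ((n - 1) - 1 - j) + 1 := by omega
      rw [e1, e2]
      ring
    rw [hsum]
    have e3 : 2 * n - 2 = 2 * (n - 1) := by omega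
    rw [e3]
    exact (keyK (n - 1)).symm
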